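/- Under the standing hypotheses, let ℋ ∈ wSub_gt(𝒢) with the chosen decomposition, let T = S^{α_ℋ}, R = S^{α_𝒢}, and for each 1 ≤ j ≤ r let T_{y_j} = S_{y_j}^{α_{ℋ_j(y_j)}} and R_{y_j} = S_{y_j}^{α_{𝒢(y_j)}}. Then R ⊆ T is a separable ring extension if and only if R_{y_j} ⊆ T_{y_j} is a separable ring extension for all 1 ≤ j ≤ r. -/

import Mathlib

open CategoryTheory

namespace PaperGalois

/-- A unital partial action of a groupoid (with object/morphism data given by a
`CategoryTheory.Groupoid` structure on `Obj`) on a commutative ring `S`.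
For a morphism `g : a ⟶ b` (source `a`, target `b`), `e g` is the central idempotent
with `S_g = S • e g`, and `act g s` encodes `α_g(s · 1_{g⁻¹})`. -/
structure UPA (Obj : Type*) [Groupoid Obj] (S : Type*) [CommRing S] where
  e : ∀ ⦃a b : Obj⦄, (a ⟶ b) → S
  act : ∀ ⦃a b : Obj⦄, (a ⟶ b) → S → S
  idem : ∀ ⦃a b : Obj⦄ (g : a ⟶ b), e g * e g = e g
  e_le : ∀ ⦃a b : Obj⦄ (g : a ⟶ b), e g * e (𝟙 b) = e g
  act_proj : ∀ ⦃a b : Obj⦄ (g : a ⟶ b) (s : S), act g (s * e (Groupoid.inv g)) = act g s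
  act_mem : ∀ ⦃a b : Obj⦄ (g : a ⟶ b) (s : S), act g s * e g = act g s
  act_add : ∀ ⦃a b : Obj⦄ (g : a ⟶ b) (s t : S), act g (s + t) = act g s + act g t
  act_mul : ∀ ⦃a b : Obj⦄ (g : a ⟶ b) (s t : S), act g (s * t) = act g s * act g t
  act_unit : ∀ ⦃a b : Obj⦄ (g : a ⟶ b), act g (e (Groupoid.inv g)) = e g
  act_id : ∀ (a : Obj) (s : S), act (𝟙 a) s = s * e (𝟙 a)
  act_inv : ∀ ⦃a b : Obj⦄ (g : a ⟶ b) (s : S),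
      act (Groupoid.inv g) (act g s) = s * e (Groupoid.inv g)
  act_comp : ∀ ⦃a b c : Obj⦄ (h : a ⟶ b) (g : b ⟶ c) (s : S),
      act g (act h s) = act (h ≫ g) s * e g

namespace UPA

variable {Obj : Type*} [Groupoid Obj] {S : Type*} [CommRing S] (α : UPA Obj S)

lemma act_zero ⦃a b : Obj⦄ (g : a ⟶ b) : α.act g 0 = 0 := by
  have h := α.act_add g 0 0
  rw [add_zero] at h
  exact (left_eq_add.mp h)

lemma act_neg ⦃a b : Obj⦄ (g : a ⟶ b) (s : S) : α.act g (-s) = -(α.act g s) := by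
  have h := α.act_add g s (-s)
  rw [add_neg_cancel, α.act_zero] at h
  exact (eq_neg_of_add_eq_zero_right h.symm)

lemma act_one ⦃a b : Obj⦄ (g : a ⟶ b) : α.act g 1 = α.e g := by
  have h := α.act_proj g 1
  rw [one_mul, α.act_unit] at h
  exact h.symm

lemma act_e_src ⦃a b : Obj⦄ (g : a ⟶ b) : α.act g (α.e (𝟙 a)) = α.e g := by
  have h1 : α.e (𝟙 a) * α.e (Groupoid.inv g) = α.e (Groupoid.inv g) := by
    rw [mul_comm]; exact α.e_le (Groupoid.inv g)
  have h2 := α.act_proj g (α.e (𝟙 a))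
  rw [h1, α.act_unit] at h2
  exact h2.symm

/-- The set of `α`-invariant elements of `S` relative to a subgroupoid `H`:
`S^{α_H} = {s ∈ S : α_h(s·1_{h⁻¹}) = s·1_h for all h ∈ H}`. -/
def invSet (H : Subgroupoid Obj) : Set S :=
  {s : S | ∀ ⦃a b : Obj⦄ (h : a ⟶ b), h ∈ H.arrows a b → α.act h s = s * α.e h}

/-- The invariants `S_y^{α_A}` of the corner ring `S_y = S·1_y` under a set `A`
of loops at `y`. -/
def grpInvSet (y : Obj) (A : Set (y ⟶ y)) : Set S :=
  {s : S | s * α.e (𝟙 y) = s ∧ ∀ g ∈ A, α.act g s = s * α.e g}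

/-- The arrows `a ⟶ b` of the groupoid acting trivially on the subset `T ⊆ S`;
for `T` a subring this gives `𝒢_T`. -/
def fixingSet (T : Set S) (a b : Obj) : Set (a ⟶ b) :=
  {g : a ⟶ b | ∀ t ∈ T, α.act g t = t * α.e g}

/-- `⊕_{y ∈ Z} S_y`, the part of `S` supported on a set `Z` of objects. -/
def partSet (Z : Set Obj) : Set S :=
  {s : S | ∀ y : Obj, y ∉ Z → s * α.e (𝟙 y) = 0}

/-- `T·1_y ⊆ S_y` for a subset `T ⊆ S`. -/
def cornerSet (T : Set S) (y : Obj) : Set S :=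
  (fun t => t * α.e (𝟙 y)) '' T

/-- `T' ⊆ S_y` is `α_{𝒢(y,z)}`-strong. -/
def strongAt (T' : Set S) (a b : Obj) : Prop :=
  ∀ g h : a ⟶ b, (h ≫ Groupoid.inv g) ∉ α.fixingSet T' a a →
    ∀ f : S, f * f = f → f ≠ 0 → (f * α.e g = f ∨ f * α.e h = f) →
      ∃ t ∈ T', α.act g t * f ≠ α.act h t * f

/-- `T ⊆ S` is `α`-strong. -/
def IsStrong (T : Set S) : Prop :=
  ∀ a b : Obj, α.strongAt (α.cornerSet T a) a b

/-- Existence of a partial Galois coordinate system for the restriction of `α` to the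
subgroupoid `H` acting on `S_H ⊆ S` (for `H = ⊤`, `Sub = univ` this says that
`S^{α_𝒢} ⊆ S` is an `α_𝒢`-partial Galois extension). -/
def IsGaloisCoordSystem (H : Subgroupoid Obj) (Sub : Set S) : Prop :=
  ∃ (m : ℕ) (av bv : Fin m → S),
    (∀ i, av i ∈ Sub) ∧ (∀ i, bv i ∈ Sub) ∧
    (∀ ⦃a b : Obj⦄ (g : a ⟶ b), g ∈ H.arrows a b → a ≠ b →
        ∑ i, av i * α.act g (bv i) = 0) ∧
    (∀ (a : Obj) (g : a ⟶ a), g ∈ H.arrows a a → g ≠ 𝟙 a →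
        ∑ i, av i * α.act g (bv i) = 0) ∧
    (∀ a : Obj, a ∈ H.objs → ∑ i, av i * α.act (𝟙 a) (bv i) = α.e (𝟙 a))

/-- Group-type condition for the restriction of `α` to `H`, at the base object `u`:
there is a transversal (inside `H`) from `u` to every object of the `H`-component of `u`
whose ideals are as large as possible. -/
def IsGroupTypeAt (H : Subgroupoid Obj) (u : Obj) : Prop :=
  ∃ σ : ∀ v : Obj, (H.arrows u v).Nonempty → (u ⟶ v),
    (∀ v hv, σ v hv ∈ H.arrows u v) ∧
    (∀ h, σ u h = 𝟙 u) ∧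
    (∀ v hv, α.e (Groupoid.inv (σ v hv)) = α.e (𝟙 u) ∧ α.e (σ v hv) = α.e (𝟙 v))

/-- The restriction `α_H` of `α` to the subgroupoid `H` is of group-type. -/
def IsGroupType (H : Subgroupoid Obj) : Prop :=
  ∀ u ∈ H.objs, α.IsGroupTypeAt H u

end UPA

structure SubCorner (S : Type*) [CommRing S] where
  carrier : Set S
  unit : S
  unit_mem : unit ∈ carrier
  mul_unit : ∀ s ∈ carrier, s * unit = s
  add_mem : ∀ ⦃s t : S⦄, s ∈ carrier → t ∈ carrier → s + t ∈ carrier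
  mul_mem : ∀ ⦃s t : S⦄, s ∈ carrier → t ∈ carrier → s * t ∈ carrier
  neg_mem : ∀ ⦃s : S⦄, s ∈ carrier → -s ∈ carrier
  zero_mem : (0 : S) ∈ carrier

namespace SubCorner

variable {S : Type*} [CommRing S]

lemma nsmul_mem (P : SubCorner S) (n : ℕ) {s : S} (hs : s ∈ P.carrier) :
    n • s ∈ P.carrier := by
  induction n with
  | zero => simpa using P.zero_mem
  | succ n ih => rw [succ_nsmul]; exact P.add_mem ih hs

lemma zsmul_mem (P : SubCorner S) (n : ℤ) {s : S} (hs : s ∈ P.carrier) :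
    n • s ∈ P.carrier := by
  cases n with
  | ofNat n => simpa [natCast_zsmul] using P.nsmul_mem n hs
  | negSucc n => rw [negSucc_zsmul]; exact P.neg_mem (P.nsmul_mem (n+1) hs)

instance (P : SubCorner S) : CommRing ↥P.carrier where
  add a b := ⟨a.1 + b.1, P.add_mem a.2 b.2⟩
  mul a b := ⟨a.1 * b.1, P.mul_mem a.2 b.2⟩
  neg a := ⟨-a.1, P.neg_mem a.2⟩
  zero := ⟨0, P.zero_mem⟩
  one := ⟨P.unit, P.unit_mem⟩
  add_assoc a b c := Subtype.ext (add_assoc _ _ _)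
  zero_add a := Subtype.ext (zero_add _)
  add_zero a := Subtype.ext (add_zero _)
  add_comm a b := Subtype.ext (add_comm _ _)
  mul_assoc a b c := Subtype.ext (mul_assoc _ _ _)
  one_mul a := Subtype.ext (by
    show P.unit * a.1 = a.1
    rw [mul_comm]; exact P.mul_unit a.1 a.2)
  mul_one a := Subtype.ext (P.mul_unit a.1 a.2)
  left_distrib a b c := Subtype.ext (left_distrib _ _ _)
  right_distrib a b c := Subtype.ext (right_distrib _ _ _)
  mul_comm a b := Subtype.ext (mul_comm _ _)
  zero_mul a := Subtype.ext (zero_mul _)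
  mul_zero a := Subtype.ext (mul_zero _)
  neg_add_cancel a := Subtype.ext (neg_add_cancel _)
  nsmul n a := ⟨n • a.1, P.nsmul_mem n a.2⟩
  nsmul_zero a := Subtype.ext (zero_nsmul _)
  nsmul_succ n a := Subtype.ext (succ_nsmul _ _)
  zsmul n a := ⟨n • a.1, P.zsmul_mem n a.2⟩
  zsmul_zero' a := Subtype.ext (zero_zsmul _)
  zsmul_succ' n a := Subtype.ext (by
    show ((n.succ : ℤ)) • a.1 = (n : ℤ) • a.1 + a.1
    rw [Int.natCast_succ, add_zsmul, one_zsmul])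
  zsmul_neg' n a := Subtype.ext (by
    show (Int.negSucc n) • a.1 = -(((n.succ : ℤ)) • a.1)
    rw [negSucc_zsmul]
    norm_cast)

def incl {P Q : SubCorner S} (hle : P.carrier ⊆ Q.carrier) (hu : P.unit = Q.unit) :
    ↥P.carrier →+* ↥Q.carrier where
  toFun a := ⟨a.1, hle a.2⟩
  map_one' := Subtype.ext hu
  map_mul' _ _ := rfl
  map_zero' := rfl
  map_add' _ _ := rfl

def IsSepExt (P Q : SubCorner S) (hle : P.carrier ⊆ Q.carrier) (hu : P.unit = Q.unit) : Prop :=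
  letI : Algebra ↥P.carrier ↥Q.carrier := (incl hle hu).toAlgebra
  ∃ ε : TensorProduct ↥P.carrier ↥Q.carrier ↥Q.carrier,
    (∀ t : ↥Q.carrier,
        (TensorProduct.tmul ↥P.carrier t (1 : ↥Q.carrier)) * ε
          = ε * (TensorProduct.tmul ↥P.carrier (1 : ↥Q.carrier) t)) ∧
    LinearMap.mul' ↥P.carrier ↥Q.carrier ε = 1

end SubCorner

/-- A `Subring` of `S`, seen as a corner subring with identity `1`. -/
def Subring.toSC {S : Type*} [CommRing S] (T : Subring S) : SubCorner S where
  carrier := (T : Set S)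
  unit := 1
  unit_mem := T.one_mem
  mul_unit := fun s _ => mul_one s
  add_mem := fun _ _ hs ht => T.add_mem hs ht
  mul_mem := fun _ _ hs ht => T.mul_mem hs ht
  neg_mem := fun _ hs => T.neg_mem hs
  zero_mem := T.zero_mem

namespace UPA

variable {Obj : Type*} [Groupoid Obj] {S : Type*} [CommRing S] (α : UPA Obj S)

lemma invSet_one_mem (H : Subgroupoid Obj) : (1 : S) ∈ α.invSet H :=
  fun _ _ h _ => by rw [α.act_one h, one_mul]

lemma invSet_zero_mem (H : Subgroupoid Obj) : (0 : S) ∈ α.invSet H :=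
  fun _ _ h _ => by rw [α.act_zero h, zero_mul]

lemma invSet_add_mem (H : Subgroupoid Obj) {s t : S} (hs : s ∈ α.invSet H)
    (ht : t ∈ α.invSet H) : s + t ∈ α.invSet H :=
  fun _ _ h hH => by rw [α.act_add h, hs h hH, ht h hH, add_mul]

lemma invSet_mul_mem (H : Subgroupoid Obj) {s t : S} (hs : s ∈ α.invSet H)
    (ht : t ∈ α.invSet H) : s * t ∈ α.invSet H :=
  fun _ _ h hH => by
    rw [α.act_mul h, hs h hH, ht h hH, mul_mul_mul_comm, α.idem h]

lemma invSet_neg_mem (H : Subgroupoid Obj) {s : S} (hs : s ∈ α.invSet H) :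
    -s ∈ α.invSet H :=
  fun _ _ h hH => by rw [α.act_neg h, hs h hH, neg_mul]

/-- The subring of invariants `S^{α_H}` of `S`, a genuine unital subring of `S`. -/
def invariantsSubring (H : Subgroupoid Obj) : Subring S where
  carrier := α.invSet H
  one_mem' := α.invSet_one_mem H
  zero_mem' := α.invSet_zero_mem H
  add_mem' := α.invSet_add_mem H
  mul_mem' := α.invSet_mul_mem H
  neg_mem' := α.invSet_neg_mem H

/-- `S^{α_H}` as a corner subring of `S` (with identity `1`). -/
def invariantsSC (H : Subgroupoid Obj) : SubCorner S where
  carrier := α.invSet H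
  unit := 1
  unit_mem := α.invSet_one_mem H
  mul_unit := fun s _ => mul_one s
  add_mem := fun _ _ hs ht => α.invSet_add_mem H hs ht
  mul_mem := fun _ _ hs ht => α.invSet_mul_mem H hs ht
  neg_mem := fun _ hs => α.invSet_neg_mem H hs
  zero_mem := α.invSet_zero_mem H

lemma grpInvSet_unit_mem (y : Obj) (A : Set (y ⟶ y)) :
    α.e (𝟙 y) ∈ α.grpInvSet y A := by
  refine ⟨α.idem (𝟙 y), fun g _ => ?_⟩
  rw [α.act_e_src g]
  have : α.e (𝟙 y) * α.e g = α.e g := by rw [mul_comm]; exact α.e_le g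
  rw [this]

/-- `S_y^{α_A}` as a corner subring of `S` (with identity `1_y`). -/
def grpInvSC (y : Obj) (A : Set (y ⟶ y)) : SubCorner S where
  carrier := α.grpInvSet y A
  unit := α.e (𝟙 y)
  unit_mem := α.grpInvSet_unit_mem y A
  mul_unit := fun _ hs => hs.1
  add_mem := fun s t hs ht =>
    ⟨by rw [add_mul, hs.1, ht.1], fun g hg => by
      rw [α.act_add g, hs.2 g hg, ht.2 g hg, add_mul]⟩
  mul_mem := fun s t hs ht =>
    ⟨by rw [mul_assoc, ht.1], fun g hg => by
      rw [α.act_mul g, hs.2 g hg, ht.2 g hg, mul_mul_mul_comm, α.idem g]⟩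
  neg_mem := fun s hs =>
    ⟨by rw [neg_mul, hs.1], fun g hg => by rw [α.act_neg g, hs.2 g hg, neg_mul]⟩
  zero_mem := ⟨zero_mul _, fun g _ => by rw [α.act_zero g, zero_mul]⟩

lemma invSet_le (H : Subgroupoid Obj) :
    α.invSet (Subgroupoid.full (Set.univ : Set Obj)) ⊆ α.invSet H :=
  fun _ hs _ _ h _ => hs h ⟨trivial, trivial⟩

lemma invSet_le_subring {T : Subring S}
    (h : ∀ s ∈ α.invSet (Subgroupoid.full (Set.univ : Set Obj)), s ∈ T) :
    (α.invariantsSC (Subgroupoid.full (Set.univ : Set Obj))).carrier ⊆ (Subring.toSC T).carrier :=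
  h

lemma grpInvSet_le (y : Obj) (A : Set (y ⟶ y)) :
    α.grpInvSet y (Set.univ : Set (y ⟶ y)) ⊆ α.grpInvSet y A :=
  fun _ hs => ⟨hs.1, fun g _ => hs.2 g trivial⟩

end UPA

/- ----------------------------------------------------------------------------
Auxiliary development for Lemma 5.2.
---------------------------------------------------------------------------- -/

namespace UPA

variable {Obj : Type*} [Groupoid Obj] {S : Type*} [CommRing S]

lemma act_absorb (α : UPA Obj S) ⦃a b : Obj⦄ (g : a ⟶ b) (s : S) :
    α.act g s * α.e (𝟙 b) = α.act g s := by
  calc α.act g s * α.e (𝟙 b) = α.act g s * (α.e g * α.e (𝟙 b)) := by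
        rw [← mul_assoc, α.act_mem]
    _ = α.act g s := by rw [α.e_le, α.act_mem]

lemma act_e_comp (α : UPA Obj S) ⦃a b c : Obj⦄ (h : a ⟶ b) (g : b ⟶ c) :
    α.act g (α.e h) = α.e (h ≫ g) * α.e g := by
  have h1 := α.act_comp h g 1
  rwa [α.act_one, α.act_one] at h1

lemma act_eq_of_loop (α : UPA Obj S) {u b : Obj} (g1 : u ⟶ b) (σb : u ⟶ b)
    (heσ : α.e σb = α.e (𝟙 b)) {t : S}
    (hk : α.act (g1 ≫ Groupoid.inv σb) t = t * α.e (g1 ≫ Groupoid.inv σb)) :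
    α.act g1 t = α.act σb t * α.e g1 := by
  have hcomp : (g1 ≫ Groupoid.inv σb) ≫ σb = g1 := by
    rw [Category.assoc, Groupoid.inv_comp, Category.comp_id]
  have h1 := α.act_comp (g1 ≫ Groupoid.inv σb) σb t
  rw [hcomp, hk, α.act_mul, α.act_e_comp, hcomp, heσ, α.e_le, α.act_absorb] at h1
  exact h1.symm

lemma proj_mem (α : UPA Obj S) {u : Obj} {A : Set (u ⟶ u)} {t : S}
    (ht : ∀ g ∈ A, α.act g t = t * α.e g) : t * α.e (𝟙 u) ∈ α.grpInvSet u A := by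
  constructor
  · rw [mul_assoc, α.idem]
  · intro g hg
    rw [α.act_mul, ht g hg, α.act_e_src]
    have h2 : α.e (𝟙 u) * α.e g = α.e g := by rw [mul_comm]; exact α.e_le g
    rw [mul_assoc, α.idem, mul_assoc, h2]

/-- A group-type transversal for the restriction of `α` to the subgroupoid `H`, based at
`u`, defined on the set `D` of objects (the `H`-component of `u`). -/
structure Trans (α : UPA Obj S) (H : Subgroupoid Obj) (u : Obj) (D : Set Obj) where
  hu : u ∈ D
  σ : ∀ v, v ∈ D → (u ⟶ v)
  mem : ∀ v hv, σ v hv ∈ H.arrows u v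
  σ_self : ∀ h, σ u h = 𝟙 u
  e_σ : ∀ v hv, α.e (σ v hv) = α.e (𝟙 v)
  closed : ∀ ⦃a b : Obj⦄ (h : a ⟶ b), h ∈ H.arrows a b → a ∈ D → b ∈ D

namespace Trans

variable {α : UPA Obj S} {H : Subgroupoid Obj} {u : Obj} {D : Set Obj}

open Classical in
/-- The `v`-component of the extension of an element of `S_u` along the transversal. -/
noncomputable def term (T : Trans α H u D) (t : S) (v : Obj) : S :=
  if hv : v ∈ D then α.act (T.σ v hv) t else 0

lemma term_pos (T : Trans α H u D) {v : Obj} (hv : v ∈ D) (t : S) :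
    T.term t v = α.act (T.σ v hv) t := dif_pos hv

lemma term_neg (T : Trans α H u D) {v : Obj} (hv : v ∉ D) (t : S) :
    T.term t v = 0 := dif_neg hv

lemma term_absorb (T : Trans α H u D) (t : S) (v : Obj) :
    T.term t v * α.e (𝟙 v) = T.term t v := by
  by_cases hv : v ∈ D
  · rw [T.term_pos hv, α.act_absorb]
  · rw [T.term_neg hv, zero_mul]

lemma term_orth (T : Trans α H u D)
    (horth : ∀ y z : Obj, y ≠ z → α.e (𝟙 y) * α.e (𝟙 z) = 0)
    {v w : Obj} (hvw : v ≠ w) (t : S) :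
    T.term t v * α.e (𝟙 w) = 0 := by
  rw [← T.term_absorb t v, mul_assoc, horth v w hvw, mul_zero]

lemma term_mul_term_orth {H' : Subgroupoid Obj} {u' : Obj} {D' : Set Obj}
    (T : Trans α H u D) (T' : Trans α H' u' D')
    (horth : ∀ y z : Obj, y ≠ z → α.e (𝟙 y) * α.e (𝟙 z) = 0)
    {v w : Obj} (hvw : v ≠ w) (s t : S) :
    T.term s v * T'.term t w = 0 := by
  calc T.term s v * T'.term t w
      = (T.term s v * α.e (𝟙 v)) * (T'.term t w * α.e (𝟙 w)) := by
        rw [T.term_absorb, T'.term_absorb]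
    _ = T.term s v * T'.term t w * (α.e (𝟙 v) * α.e (𝟙 w)) := by ring
    _ = 0 := by rw [horth v w hvw, mul_zero]

lemma term_add (T : Trans α H u D) (s t : S) (v : Obj) :
    T.term (s + t) v = T.term s v + T.term t v := by
  by_cases hv : v ∈ D
  · rw [T.term_pos hv, T.term_pos hv, T.term_pos hv, α.act_add]
  · rw [T.term_neg hv, T.term_neg hv, T.term_neg hv, add_zero]

lemma term_zero (T : Trans α H u D) (v : Obj) : T.term 0 v = 0 := by
  by_cases hv : v ∈ D
  · rw [T.term_pos hv, α.act_zero]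
  · rw [T.term_neg hv]

variable [Fintype Obj]

/-- Extension of an element of `S_u` to an `H`-invariant element supported on `D`. -/
noncomputable def ext (T : Trans α H u D) (t : S) : S := ∑ v : Obj, T.term t v

lemma ext_mul_e (T : Trans α H u D)
    (horth : ∀ y z : Obj, y ≠ z → α.e (𝟙 y) * α.e (𝟙 z) = 0) (t : S) (w : Obj) :
    T.ext t * α.e (𝟙 w) = T.term t w := by
  rw [ext, Finset.sum_mul, Finset.sum_eq_single_of_mem w (Finset.mem_univ w)
    (fun v _ hv => by rw [T.term_orth horth hv]), T.term_absorb]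

lemma ext_e_src (T : Trans α H u D)
    (horth : ∀ y z : Obj, y ≠ z → α.e (𝟙 y) * α.e (𝟙 z) = 0) (t : S) :
    T.ext t * α.e (𝟙 u) = t * α.e (𝟙 u) := by
  rw [T.ext_mul_e horth, T.term_pos T.hu, T.σ_self, α.act_id]

lemma ext_add (T : Trans α H u D) (s t : S) : T.ext (s + t) = T.ext s + T.ext t := by
  rw [ext, ext, ext, ← Finset.sum_add_distrib]
  exact Finset.sum_congr rfl fun v _ => T.term_add s t v

lemma ext_zero (T : Trans α H u D) : T.ext 0 = 0 := by
  rw [ext]; exact Finset.sum_eq_zero fun v _ => T.term_zero v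

lemma ext_mul (T : Trans α H u D)
    (horth : ∀ y z : Obj, y ≠ z → α.e (𝟙 y) * α.e (𝟙 z) = 0) (s t : S) :
    T.ext (s * t) = T.ext s * T.ext t := by
  rw [ext, ext, ext, Finset.sum_mul_sum]
  refine Finset.sum_congr rfl fun v _ => ?_
  rw [Finset.sum_eq_single_of_mem v (Finset.mem_univ v)
      (fun w _ hw => T.term_mul_term_orth T horth (Ne.symm hw) s t)]
  by_cases hv : v ∈ D
  · rw [T.term_pos hv, T.term_pos hv, T.term_pos hv, α.act_mul]
  · rw [T.term_neg hv, T.term_neg hv, zero_mul]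

lemma ext_invariant (T : Trans α H u D)
    (horth : ∀ y z : Obj, y ≠ z → α.e (𝟙 y) * α.e (𝟙 z) = 0) {t : S}
    (ht : ∀ k : u ⟶ u, k ∈ H.arrows u u → α.act k t = t * α.e k) :
    T.ext t ∈ α.invSet H := by
  intro a b h hH
  have hterm0 : ∀ v : Obj, v ≠ a → α.act h (T.term t v) = 0 := by
    intro v hv
    have h3 : α.e (Groupoid.inv h) * α.e (𝟙 a) = α.e (Groupoid.inv h) := α.e_le _
    have h2 : T.term t v * α.e (Groupoid.inv h) = 0 := by
      calc T.term t v * α.e (Groupoid.inv h)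
          = (T.term t v * α.e (𝟙 v)) * (α.e (Groupoid.inv h) * α.e (𝟙 a)) := by
            rw [T.term_absorb, h3]
        _ = T.term t v * α.e (Groupoid.inv h) * (α.e (𝟙 v) * α.e (𝟙 a)) := by ring
        _ = 0 := by rw [horth v a hv, mul_zero]
    rw [← α.act_proj h, h2, α.act_zero]
  have hsum : α.act h (T.ext t) = α.act h (T.term t a) := by
    have hmap : α.act h (T.ext t) = ∑ v : Obj, α.act h (T.term t v) :=
      map_sum (AddMonoidHom.mk' (α.act h) (α.act_add h)) (fun v => T.term t v) Finset.univ
    rw [hmap, Finset.sum_eq_single_of_mem a (Finset.mem_univ a) (fun v _ hv => hterm0 v hv)]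
  have hhb : T.ext t * α.e h = T.term t b * α.e h := by
    calc T.ext t * α.e h = T.ext t * (α.e h * α.e (𝟙 b)) := by rw [α.e_le]
      _ = (T.ext t * α.e (𝟙 b)) * α.e h := by ring
      _ = T.term t b * α.e h := by rw [T.ext_mul_e horth]
  by_cases haD : a ∈ D
  · have hbD : b ∈ D := T.closed h hH haD
    have h4 := α.act_comp (T.σ a haD) h t
    have hkmem : (T.σ a haD ≫ h) ≫ Groupoid.inv (T.σ b hbD) ∈ H.arrows u u :=
      H.mul (H.mul (T.mem a haD) hH) (H.inv (T.mem b hbD))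
    have h5 := α.act_eq_of_loop (T.σ a haD ≫ h) (T.σ b hbD) (T.e_σ b hbD) (ht _ hkmem)
    have h6 : α.e (T.σ a haD ≫ h) * α.e h = α.e h := by
      have h7 := α.act_e_comp (T.σ a haD) h
      rw [T.e_σ a haD, α.act_e_src] at h7
      exact h7.symm
    rw [hsum, T.term_pos haD, h4, h5, hhb, T.term_pos hbD, mul_assoc, h6]
  · have hbD : b ∉ D := fun hb => haD (T.closed (Groupoid.inv h) (H.inv hH) hb)
    rw [hsum, T.term_neg haD, α.act_zero, hhb, T.term_neg hbD, zero_mul]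

lemma ext_proj (T : Trans α H u D) {t : S} (ht : t ∈ α.invSet H) :
    T.ext (t * α.e (𝟙 u)) = t * T.ext (α.e (𝟙 u)) := by
  rw [ext, ext, Finset.mul_sum]
  refine Finset.sum_congr rfl fun v _ => ?_
  by_cases hv : v ∈ D
  · rw [T.term_pos hv, T.term_pos hv, α.act_mul, ht (T.σ v hv) (T.mem v hv), α.act_e_src,
      mul_assoc, α.idem]
  · rw [T.term_neg hv, T.term_neg hv, mul_zero]

lemma ext_mul_ext {H' : Subgroupoid Obj} (T : Trans α H u D) (T' : Trans α H' u Set.univ)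
    (horth : ∀ y z : Obj, y ≠ z → α.e (𝟙 y) * α.e (𝟙 z) = 0)
    {s : S} (hs : ∀ k : u ⟶ u, α.act k s = s * α.e k) (t : S) :
    T.ext (s * t) = T'.ext s * T.ext t := by
  rw [ext, ext, ext, Finset.sum_mul_sum]
  refine Finset.sum_congr rfl fun v _ => ?_
  rw [Finset.sum_eq_single_of_mem v (Finset.mem_univ v)
      (fun w _ hw => T'.term_mul_term_orth T horth (Ne.symm hw) s t)]
  by_cases hv : v ∈ D
  · rw [T.term_pos hv, T'.term_pos (Set.mem_univ v), T.term_pos hv]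
    have h5 := α.act_eq_of_loop (T'.σ v (Set.mem_univ v)) (T.σ v hv) (T.e_σ v hv) (hs _)
    rw [h5, T'.e_σ v (Set.mem_univ v), α.act_mul, mul_assoc,
      mul_comm (α.e (𝟙 v)) (α.act (T.σ v hv) t), α.act_absorb]
  · rw [T.term_neg hv, T.term_neg hv, mul_zero]

open Classical in
lemma ext_e_base (T : Trans α H u D) :
    T.ext (α.e (𝟙 u)) = ∑ v : Obj, if v ∈ D then α.e (𝟙 v) else 0 := by
  rw [ext]
  refine Finset.sum_congr rfl fun v _ => ?_
  by_cases hv : v ∈ D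
  · rw [T.term_pos hv, α.act_e_src, T.e_σ v hv, if_pos hv]
  · rw [T.term_neg hv, if_neg hv]

end Trans

/-- The canonical group-type transversal for the full groupoid, based at `u0`. -/
def fullTrans (α : UPA Obj S) (x : Obj) (τ : ∀ y : Obj, x ⟶ y)
    (hgt : ∀ y : Obj, α.e (Groupoid.inv (τ y)) = α.e (𝟙 x) ∧ α.e (τ y) = α.e (𝟙 y))
    (u0 : Obj) : Trans α (Subgroupoid.full (Set.univ : Set Obj)) u0 Set.univ where
  hu := Set.mem_univ u0
  σ := fun v _ => Groupoid.inv (τ u0) ≫ τ v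
  mem := fun _ _ => ⟨trivial, trivial⟩
  σ_self := fun _ => Groupoid.inv_comp (τ u0)
  e_σ := fun v _ => by
    have h7 := α.act_e_comp (Groupoid.inv (τ u0)) (τ v)
    rw [(hgt u0).1, α.act_e_src, (hgt v).2, α.e_le] at h7
    exact h7.symm
  closed := fun _ _ _ _ _ => trivial

/-- Projection onto the corner invariants `S_u^{α_A}`. -/
def cornerHom (α : UPA Obj S) (H : Subgroupoid Obj) (u : Obj) (A : Set (u ⟶ u))
    (hA : ∀ g ∈ A, g ∈ H.arrows u u) :
    ↥(α.invariantsSC H).carrier →+* ↥(α.grpInvSC u A).carrier where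
  toFun t := ⟨t.1 * α.e (𝟙 u), α.proj_mem (fun g hg => t.2 g (hA g hg))⟩
  map_one' := Subtype.ext (one_mul _)
  map_mul' s t := Subtype.ext (by
    show (s.1 * t.1) * α.e (𝟙 u) = (s.1 * α.e (𝟙 u)) * (t.1 * α.e (𝟙 u))
    rw [mul_mul_mul_comm, α.idem])
  map_zero' := Subtype.ext (zero_mul _)
  map_add' s t := Subtype.ext (add_mul _ _ _)

variable [Fintype Obj]

/-- Extension along a transversal, as an additive map between invariant rings. -/
noncomputable def extHom (α : UPA Obj S) (H : Subgroupoid Obj) {u : Obj} {D : Set Obj}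
    (T : Trans α H u D)
    (horth : ∀ y z : Obj, y ≠ z → α.e (𝟙 y) * α.e (𝟙 z) = 0) :
    ↥(α.grpInvSC u (H.arrows u u)).carrier →+ ↥(α.invariantsSC H).carrier where
  toFun t := ⟨T.ext t.1, T.ext_invariant horth (fun k hk => t.2.2 k hk)⟩
  map_zero' := Subtype.ext T.ext_zero
  map_add' s t := Subtype.ext (T.ext_add s.1 t.1)

end UPA

/-- Existence of a separability idempotent (abstract form). -/
def SepIdem (R A : Type*) [CommRing R] [CommRing A] [Algebra R A] : Prop :=
  ∃ ε : TensorProduct R A A,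
    (∀ t : A, (TensorProduct.tmul R t 1) * ε = ε * (TensorProduct.tmul R 1 t)) ∧
    LinearMap.mul' R A ε = 1

theorem SepIdem.transfer {R A R' A' : Type*} [CommRing R] [CommRing A] [CommRing R']
    [CommRing A'] [Algebra R A] [Algebra R' A']
    (g : R →+* R') (f : A →+* A')
    (hcomp : ∀ r : R, algebraMap R' A' (g r) = f (algebraMap R A r))
    (hsurj : Function.Surjective ⇑f)
    (h : SepIdem R A) : SepIdem R' A' := by
  obtain ⟨ε, hc, hm⟩ := h
  have hfz : ∀ (r : R) (z : A), f (r • z) = g r • f z := by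
    intro r z; rw [Algebra.smul_def, Algebra.smul_def, map_mul, hcomp]
  let F : A →+ A →+ TensorProduct R' A' A' :=
    AddMonoidHom.mk'
      (fun p => AddMonoidHom.mk' (fun q => f p ⊗ₜ[R'] f q)
        (fun q q' => by
          show f p ⊗ₜ[R'] f (q + q') = f p ⊗ₜ[R'] f q + f p ⊗ₜ[R'] f q'
          rw [map_add, TensorProduct.tmul_add]))
      (fun p p' => AddMonoidHom.ext fun q => by
        show f (p + p') ⊗ₜ[R'] f q = f p ⊗ₜ[R'] f q + f p' ⊗ₜ[R'] f q
        rw [map_add, TensorProduct.add_tmul])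
  have hbal : ∀ (r : R) (p q : A), F (r • p) q = F p (r • q) := by
    intro r p q
    show f (r • p) ⊗ₜ[R'] f q = f p ⊗ₜ[R'] f (r • q)
    rw [hfz, hfz, TensorProduct.smul_tmul]
  let Φ := TensorProduct.liftAddHom F hbal
  have Φtmul : ∀ p q : A, Φ (p ⊗ₜ[R] q) = f p ⊗ₜ[R'] f q := fun _ _ => rfl
  have Φleft : ∀ (p q : A) (η : TensorProduct R A A),
      Φ ((p ⊗ₜ[R] q) * η) = (f p ⊗ₜ[R'] f q) * Φ η := by
    intro p q η
    induction η using TensorProduct.induction_on with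
    | zero => simp only [mul_zero, map_zero]
    | tmul a b =>
        rw [Algebra.TensorProduct.tmul_mul_tmul, Φtmul, Φtmul,
          Algebra.TensorProduct.tmul_mul_tmul, map_mul, map_mul]
    | add η₁ η₂ h₁ h₂ => simp only [mul_add, map_add, h₁, h₂]
  have Φright : ∀ (p q : A) (η : TensorProduct R A A),
      Φ (η * (p ⊗ₜ[R] q)) = Φ η * (f p ⊗ₜ[R'] f q) := by
    intro p q η
    induction η using TensorProduct.induction_on with
    | zero => simp only [zero_mul, map_zero]
    | tmul a b =>
        rw [Algebra.TensorProduct.tmul_mul_tmul, Φtmul, Φtmul,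
          Algebra.TensorProduct.tmul_mul_tmul, map_mul, map_mul]
    | add η₁ η₂ h₁ h₂ => simp only [add_mul, map_add, h₁, h₂]
  have Φmul' : ∀ η : TensorProduct R A A,
      LinearMap.mul' R' A' (Φ η) = f (LinearMap.mul' R A η) := by
    intro η
    induction η using TensorProduct.induction_on with
    | zero => simp only [map_zero]
    | tmul a b => rw [Φtmul, LinearMap.mul'_apply, LinearMap.mul'_apply, map_mul]
    | add η₁ η₂ h₁ h₂ => simp only [map_add, h₁, h₂]
  refine ⟨Φ ε, fun t' => ?_, ?_⟩
  · obtain ⟨t, rfl⟩ := hsurj t'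
    have h1 : (f t ⊗ₜ[R'] (1 : A')) * Φ ε = Φ ((t ⊗ₜ[R] (1 : A)) * ε) := by
      rw [Φleft, map_one]
    have h2 : Φ (ε * ((1 : A) ⊗ₜ[R] t)) = Φ ε * ((1 : A') ⊗ₜ[R'] f t) := by
      rw [Φright, map_one]
    rw [h1, hc t, h2]
  · rw [Φmul', hm, map_one]

theorem SepIdem.glue {R A : Type*} [CommRing R] [CommRing A] [Algebra R A]
    {ι : Type*} [Fintype ι]
    (R' A' : ι → Type*) [∀ j, CommRing (R' j)] [∀ j, CommRing (A' j)]
    [∀ j, Algebra (R' j) (A' j)]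
    (π : ∀ j, A →+* A' j) (E : ∀ j, A' j →+ A) (EP : ∀ j, R' j → R)
    (hE_mul : ∀ j (u v : A' j), E j (u * v) = E j u * E j v)
    (hE_smul : ∀ j (s : R' j) (u : A' j),
        E j (algebraMap (R' j) (A' j) s * u) = algebraMap R A (EP j s) * E j u)
    (hE_absorb : ∀ j (t : A) (u : A' j), E j (π j t * u) = t * E j u)
    (hE_one : ∑ j, E j 1 = 1)
    (hsep : ∀ j, SepIdem (R' j) (A' j)) : SepIdem R A := by
  classical
  have key : ∀ j, ∃ η : TensorProduct R A A,
      (∀ t : A, (t ⊗ₜ[R] (1 : A)) * η = η * ((1 : A) ⊗ₜ[R] t)) ∧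
      LinearMap.mul' R A η = E j 1 := by
    intro j
    obtain ⟨ε, hc, hm⟩ := hsep j
    have hfz : ∀ (s : R' j) (z : A' j), E j (s • z) = EP j s • E j z := by
      intro s z; rw [Algebra.smul_def, Algebra.smul_def, hE_smul]
    let F : A' j →+ A' j →+ TensorProduct R A A :=
      AddMonoidHom.mk'
        (fun p => AddMonoidHom.mk' (fun q => E j p ⊗ₜ[R] E j q)
          (fun q q' => by
            show E j p ⊗ₜ[R] E j (q + q') = E j p ⊗ₜ[R] E j q + E j p ⊗ₜ[R] E j q'
            rw [map_add, TensorProduct.tmul_add]))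
        (fun p p' => AddMonoidHom.ext fun q => by
          show E j (p + p') ⊗ₜ[R] E j q = E j p ⊗ₜ[R] E j q + E j p' ⊗ₜ[R] E j q
          rw [map_add, TensorProduct.add_tmul])
    have hbal : ∀ (s : R' j) (p q : A' j), F (s • p) q = F p (s • q) := by
      intro s p q
      show E j (s • p) ⊗ₜ[R] E j q = E j p ⊗ₜ[R] E j (s • q)
      rw [hfz, hfz, TensorProduct.smul_tmul]
    let Ψ := TensorProduct.liftAddHom F hbal
    have Ψtmul : ∀ p q : A' j, Ψ (p ⊗ₜ[R' j] q) = E j p ⊗ₜ[R] E j q := fun _ _ => rfl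
    have Ψleft : ∀ (t : A) (η : TensorProduct (R' j) (A' j) (A' j)),
        (t ⊗ₜ[R] (1 : A)) * Ψ η = Ψ ((π j t ⊗ₜ[R' j] (1 : A' j)) * η) := by
      intro t η
      induction η using TensorProduct.induction_on with
      | zero => simp only [map_zero, mul_zero]
      | tmul a b =>
          rw [Ψtmul, Algebra.TensorProduct.tmul_mul_tmul,
            Algebra.TensorProduct.tmul_mul_tmul, one_mul, one_mul, Ψtmul, hE_absorb]
      | add η₁ η₂ h₁ h₂ => simp only [mul_add, map_add, h₁, h₂]
    have Ψright : ∀ (t : A) (η : TensorProduct (R' j) (A' j) (A' j)),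
        Ψ (η * ((1 : A' j) ⊗ₜ[R' j] π j t)) = Ψ η * ((1 : A) ⊗ₜ[R] t) := by
      intro t η
      induction η using TensorProduct.induction_on with
      | zero => simp only [zero_mul, map_zero]
      | tmul a b =>
          have h9 : E j (b * π j t) = E j b * t := by
            rw [mul_comm b (π j t), hE_absorb, mul_comm]
          rw [Algebra.TensorProduct.tmul_mul_tmul, mul_one, Ψtmul, Ψtmul,
            Algebra.TensorProduct.tmul_mul_tmul, mul_one, h9]
      | add η₁ η₂ h₁ h₂ => simp only [add_mul, map_add, h₁, h₂]
    have Ψmul' : ∀ η : TensorProduct (R' j) (A' j) (A' j),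
        LinearMap.mul' R A (Ψ η) = E j (LinearMap.mul' (R' j) (A' j) η) := by
      intro η
      induction η using TensorProduct.induction_on with
      | zero => simp only [map_zero]
      | tmul a b => rw [Ψtmul, LinearMap.mul'_apply, LinearMap.mul'_apply, hE_mul]
      | add η₁ η₂ h₁ h₂ => simp only [map_add, h₁, h₂]
    exact ⟨Ψ ε, fun t => by rw [Ψleft, hc (π j t), Ψright], by rw [Ψmul', hm]⟩
  choose η hc' hm' using key
  refine ⟨∑ j, η j, fun t => ?_, ?_⟩
  · rw [Finset.mul_sum, Finset.sum_mul]
    exact Finset.sum_congr rfl fun j _ => hc' j t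
  · rw [map_sum, ← hE_one]
    exact Finset.sum_congr rfl fun j _ => hm' j


/-- **Lemma 5.2.**  Standing hypotheses.  Let `ℋ ∈ wSub_gt(𝒢)` with its component
decomposition (components `ℋ_j` on `Y_j`, chosen `y_j ∈ Y_j`), let `T = S^{α_ℋ}`,
`R = S^{α_𝒢}`, and for each `j` let `T_{y_j} = S_{y_j}^{α_{ℋ_j(y_j)}}` and
`R_{y_j} = S_{y_j}^{α_{𝒢(y_j)}}`.  Then `R ⊆ T` is a separable ring extension if and only
if `R_{y_j} ⊆ T_{y_j}` is a separable ring extension for all `1 ≤ j ≤ r`. -/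
theorem separable_iff_components_separable
    {Obj : Type*} [Groupoid Obj] [Fintype Obj] [∀ a b : Obj, Finite (a ⟶ b)]
    {S : Type*} [CommRing S] (α : UPA Obj S)
    (hsum : ∑ y : Obj, α.e (𝟙 y) = 1)
    (horth : ∀ y z : Obj, y ≠ z → α.e (𝟙 y) * α.e (𝟙 z) = 0)
    (hconn : ∀ a b : Obj, Nonempty (a ⟶ b))
    (x : Obj) (τ : ∀ y : Obj, x ⟶ y) (hτx : τ x = 𝟙 x)
    (hgt : ∀ y : Obj, α.e (Groupoid.inv (τ y)) = α.e (𝟙 x) ∧ α.e (τ y) = α.e (𝟙 y))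
    (H : Subgroupoid Obj) (hwide : H.IsWide)
    (r : ℕ) (Y : Fin r → Set Obj)
    (hYcover : ∀ u : Obj, ∃ j, u ∈ Y j)
    (hYconn : ∀ j, ∀ u ∈ Y j, ∀ v ∈ Y j, (H.arrows u v).Nonempty)
    (hYdisj : ∀ j k, j ≠ k → ∀ u ∈ Y j, ∀ v ∈ Y k, H.arrows u v = ∅)
    (y : Fin r → Obj) (hy : ∀ j, y j ∈ Y j)
    (hHgt : α.IsGroupType H) :
    SubCorner.IsSepExt (α.invariantsSC (Subgroupoid.full (Set.univ : Set Obj)))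
        (α.invariantsSC H) (α.invSet_le H) rfl ↔
      ∀ j : Fin r,
        SubCorner.IsSepExt (α.grpInvSC (y j) (Set.univ : Set ((y j) ⟶ (y j))))
          (α.grpInvSC (y j) (H.arrows (y j) (y j)))
          (α.grpInvSet_le (y j) (H.arrows (y j) (y j))) rfl := by
  classical
  have horth' := horth
  -- the H-transversals
  set DH : Fin r → Set Obj := fun j => {v | (H.arrows (y j) v).Nonempty} with hDH
  have TH : ∀ j, UPA.Trans α H (y j) (DH j) := fun j =>
    let hobj : y j ∈ H.objs := ⟨𝟙 (y j), hwide.wide (y j)⟩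
    let hgx := hHgt (y j) hobj
    { hu := ⟨𝟙 (y j), hwide.wide (y j)⟩
      σ := Classical.choose hgx
      mem := (Classical.choose_spec hgx).1
      σ_self := (Classical.choose_spec hgx).2.1
      e_σ := fun v hv => ((Classical.choose_spec hgx).2.2 v hv).2
      closed := fun a b h hH ha => ha.elim fun g hg => ⟨g ≫ h, H.mul hg hH⟩ }
  have TG : ∀ j, UPA.Trans α (Subgroupoid.full (Set.univ : Set Obj)) (y j) Set.univ :=
    fun j => UPA.fullTrans α x τ hgt (y j)
  -- corner projections
  let πT : ∀ j, ↥(α.invariantsSC H).carrier →+*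
      ↥(α.grpInvSC (y j) (H.arrows (y j) (y j))).carrier :=
    fun j => UPA.cornerHom α H (y j) (H.arrows (y j) (y j)) (fun _ hg => hg)
  let ρT : ∀ j, ↥(α.invariantsSC (Subgroupoid.full (Set.univ : Set Obj))).carrier →+*
      ↥(α.grpInvSC (y j) (Set.univ : Set ((y j) ⟶ (y j)))).carrier :=
    fun j => UPA.cornerHom α (Subgroupoid.full (Set.univ : Set Obj)) (y j)
      (Set.univ : Set ((y j) ⟶ (y j))) (fun _ _ => ⟨trivial, trivial⟩)
  let ET : ∀ j, ↥(α.grpInvSC (y j) (H.arrows (y j) (y j))).carrier →+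
      ↥(α.invariantsSC H).carrier := fun j => UPA.extHom α H (TH j) horth
  letI instRT : Algebra ↥(α.invariantsSC (Subgroupoid.full (Set.univ : Set Obj))).carrier
      ↥(α.invariantsSC H).carrier :=
    (SubCorner.incl (P := α.invariantsSC (Subgroupoid.full (Set.univ : Set Obj)))
      (Q := α.invariantsSC H) (α.invSet_le H) rfl).toAlgebra
  letI instj : ∀ j : Fin r,
      Algebra ↥(α.grpInvSC (y j) (Set.univ : Set ((y j) ⟶ (y j)))).carrier
        ↥(α.grpInvSC (y j) (H.arrows (y j) (y j))).carrier :=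
    fun j => (SubCorner.incl (P := α.grpInvSC (y j) (Set.univ : Set ((y j) ⟶ (y j))))
      (Q := α.grpInvSC (y j) (H.arrows (y j) (y j)))
      (α.grpInvSet_le (y j) (H.arrows (y j) (y j))) rfl).toAlgebra
  have hsurjT : ∀ j, Function.Surjective ⇑(πT j) := by
    intro j t'
    refine ⟨ET j t', Subtype.ext ?_⟩
    show (TH j).ext t'.1 * α.e (𝟙 (y j)) = t'.1
    rw [(TH j).ext_e_src horth, t'.2.1]
  constructor
  · intro hsep j
    have h1 : SepIdem
        ↥(α.invariantsSC (Subgroupoid.full (Set.univ : Set Obj))).carrier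
        ↥(α.invariantsSC H).carrier := hsep
    have hcomp : ∀ rr, algebraMap
        ↥(α.grpInvSC (y j) (Set.univ : Set ((y j) ⟶ (y j)))).carrier
        ↥(α.grpInvSC (y j) (H.arrows (y j) (y j))).carrier (ρT j rr)
        = πT j (algebraMap _ _ rr) := fun rr => Subtype.ext rfl
    exact SepIdem.transfer (ρT j) (πT j) hcomp (hsurjT j) h1
  · intro hall
    have h1 : ∀ j, SepIdem
        ↥(α.grpInvSC (y j) (Set.univ : Set ((y j) ⟶ (y j)))).carrier
        ↥(α.grpInvSC (y j) (H.arrows (y j) (y j))).carrier := fun j => hall j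
    -- the maps into the big invariant rings
    let EPT : ∀ j, ↥(α.grpInvSC (y j) (Set.univ : Set ((y j) ⟶ (y j)))).carrier →
        ↥(α.invariantsSC (Subgroupoid.full (Set.univ : Set Obj))).carrier := fun j s =>
      ⟨(TG j).ext s.1, (TG j).ext_invariant horth (fun k _ => s.2.2 k (Set.mem_univ k))⟩
    have hE_mul : ∀ j u v, ET j (u * v) = ET j u * ET j v := fun j u v =>
      Subtype.ext ((TH j).ext_mul horth u.1 v.1)
    have hE_smul : ∀ j s u, ET j (algebraMap _ _ s * u)
        = algebraMap ↥(α.invariantsSC (Subgroupoid.full (Set.univ : Set Obj))).carrier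
            ↥(α.invariantsSC H).carrier (EPT j s) * ET j u := by
      intro j s u
      refine Subtype.ext ?_
      show (TH j).ext (s.1 * u.1) = (TG j).ext s.1 * (TH j).ext u.1
      exact (TH j).ext_mul_ext (TG j) horth (fun k => s.2.2 k (Set.mem_univ k)) u.1
    have hE_absorb : ∀ j t u, ET j (πT j t * u) = t * ET j u := by
      intro j t u
      refine Subtype.ext ?_
      show (TH j).ext ((t.1 * α.e (𝟙 (y j))) * u.1) = t.1 * (TH j).ext u.1
      have hu1 : α.e (𝟙 (y j)) * u.1 = u.1 := by rw [mul_comm]; exact u.2.1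
      rw [(TH j).ext_mul horth, (TH j).ext_proj t.2, mul_assoc, ← (TH j).ext_mul horth, hu1]
    -- the partition of unity
    have hunique : ∀ v : Obj, ∃ j, v ∈ DH j ∧ ∀ k, v ∈ DH k → k = j := by
      intro v
      obtain ⟨j, hj⟩ := hYcover v
      refine ⟨j, hYconn j (y j) (hy j) v hj, fun k hk => ?_⟩
      by_contra hkj
      obtain ⟨g, hg⟩ := hk
      obtain ⟨g', hg'⟩ := hYconn j (y j) (hy j) v hj
      have hmem : g' ≫ Groupoid.inv g ∈ H.arrows (y j) (y k) := H.mul hg' (H.inv hg)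
      have hempty := hYdisj j k (fun h => hkj h.symm) (y j) (hy j) (y k) (hy k)
      rw [hempty] at hmem
      exact hmem
    have hpart : ∑ j, (TH j).ext (α.e (𝟙 (y j))) = 1 := by
      calc ∑ j, (TH j).ext (α.e (𝟙 (y j)))
          = ∑ j, ∑ v : Obj, if v ∈ DH j then α.e (𝟙 v) else 0 :=
            Finset.sum_congr rfl fun j _ => (TH j).ext_e_base
        _ = ∑ v : Obj, ∑ j, if v ∈ DH j then α.e (𝟙 v) else 0 := Finset.sum_comm
        _ = ∑ v : Obj, α.e (𝟙 v) := Finset.sum_congr rfl fun v _ => by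
            obtain ⟨j0, hj0, huq⟩ := hunique v
            rw [Finset.sum_eq_single_of_mem j0 (Finset.mem_univ j0)
              (fun k _ hk => if_neg fun hvk => hk (huq k hvk)), if_pos hj0]
        _ = 1 := hsum
    have hE_one : ∑ j, ET j 1 = 1 := by
      let vhom : ↥(α.invariantsSC H).carrier →+ S :=
        { toFun := Subtype.val, map_zero' := rfl, map_add' := fun _ _ => rfl }
      refine Subtype.ext ?_
      have hval : (↑(∑ j, ET j 1) : S) = ∑ j, (↑(ET j 1) : S) :=
        map_sum vhom (fun j => ET j 1) Finset.univ
      rw [hval]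
      exact hpart
    exact SepIdem.glue _ _ πT ET EPT hE_mul hE_smul hE_absorb hE_one h1

end PaperGalois
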